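/- Define ℰ_v(n,k) := Σ_{r+s=v, r,s≥0} ((-1)^r / 8^v) · (Γ(v - 3/2) Γ(v + 3/2)) / (s! r! Γ(r - 3/2) Γ(s + 3/2)) · (2k+1)^{2s+1} (8n - (2k+1)²)^r. Then for every v ≥ 0 and every positive integer n, ℰ_v(n,0) ≠ 0. -/

import Mathlib

open Finset

private lemma hne_m (k : ℕ) : ((k:ℝ) - 3/2) ≠ 0 := by
  intro h
  have h2 : ((2*k : ℕ) : ℝ) = ((3:ℕ):ℝ) := by push_cast; linarith
  have := Nat.cast_injective h2
  omega

private lemma hne_p (k : ℕ) : ((k:ℝ) + 3/2) ≠ 0 := by positivity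

private lemma G1 (k : ℕ) : Real.Gamma ((k:ℝ) - 3/2)
    = (∏ j ∈ range k, ((j:ℝ) - 3/2)) * Real.Gamma (-(3/2)) := by
  induction k with
  | zero => norm_num
  | succ k ih =>
    have harg : ((k+1:ℕ):ℝ) - 3/2 = ((k:ℝ) - 3/2) + 1 := by push_cast; ring
    rw [harg, Real.Gamma_add_one (hne_m k), ih, prod_range_succ]
    ring

private lemma G2 (k : ℕ) : Real.Gamma ((k:ℝ) + 3/2)
    = (∏ j ∈ range k, ((j:ℝ) + 3/2)) * Real.Gamma (3/2) := by
  induction k with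
  | zero => simp
  | succ k ih =>
    have harg : ((k+1:ℕ):ℝ) + 3/2 = ((k:ℝ) + 3/2) + 1 := by push_cast; ring
    rw [harg, Real.Gamma_add_one (hne_p k), ih, prod_range_succ]
    ring

private lemma Pq_mul (m : ℕ) :
    (4:ℝ)^m * (Nat.factorial m) * ∏ j ∈ range m, ((j:ℝ) + 1/2)
      = Nat.factorial (2*m) := by
  induction m with
  | zero => simp
  | succ m ih =>
    rw [prod_range_succ, show 2*(m+1) = 2*m+1+1 by ring]
    push_cast [Nat.factorial_succ] at ih ⊢
    linear_combination (4*((m:ℝ)+1)*((m:ℝ)+1/2)) * ih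

private lemma Pp_mul (m : ℕ) :
    (4:ℝ)^m * (Nat.factorial m) * ∏ j ∈ range m, ((j:ℝ) + 3/2)
      = Nat.factorial (2*m+1) := by
  induction m with
  | zero => simp
  | succ m ih =>
    rw [prod_range_succ, show 2*(m+1)+1 = 2*m+1+1+1 by ring]
    push_cast [Nat.factorial_succ] at ih ⊢
    linear_combination (4*((m:ℝ)+1)*((m:ℝ)+3/2)) * ih

private lemma Pm_eq (r : ℕ) :
    (∏ j ∈ range r, ((j:ℝ) - 3/2)) * ((2*(r:ℝ) - 3) * (2*(r:ℝ) - 1))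
      = 3 * ∏ j ∈ range r, ((j:ℝ) + 1/2) := by
  induction r with
  | zero => norm_num
  | succ r ih =>
    rw [prod_range_succ, prod_range_succ]
    push_cast
    linear_combination ((r:ℝ)+1/2) * ih


private lemma fact_ne (m : ℕ) : ((Nat.factorial m : ℕ) : ℝ) ≠ 0 := by
  exact_mod_cast (Nat.factorial_pos m).ne'

private lemma g1_ne : Real.Gamma (-(3/2) : ℝ) ≠ 0 := by
  apply Real.Gamma_ne_zero
  intro m h
  have h2 : ((2*m : ℕ) : ℝ) = ((3:ℕ):ℝ) := by push_cast; linarith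
  have := Nat.cast_injective h2
  omega

private lemma g2_ne : Real.Gamma ((3:ℝ)/2) ≠ 0 := (Real.Gamma_pos_of_pos (by norm_num)).ne'

private lemma hkey (r s : ℕ) :
    3 * ((Nat.factorial (r+s) : ℕ) : ℝ) * (∏ j ∈ range (r+s), ((j:ℝ) + 3/2))
      = (Nat.choose (2*(r+s)+1) (2*r) : ℝ) * ((2*(r:ℝ) - 3) * (2*(r:ℝ) - 1)) *
        (Nat.factorial s : ℝ) * (Nat.factorial r : ℝ) *
        (∏ j ∈ range r, ((j:ℝ) - 3/2)) * (∏ j ∈ range s, ((j:ℝ) + 3/2)) := by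
  have hch : ((Nat.choose (2*(r+s)+1) (2*r)) : ℝ) * (Nat.factorial (2*r)) * (Nat.factorial (2*s+1))
      = (Nat.factorial (2*(r+s)+1)) := by
    have h := Nat.choose_mul_factorial_mul_factorial
      (show 2*r ≤ 2*(r+s)+1 by omega)
    have h2 : 2*(r+s)+1 - 2*r = 2*s+1 := by omega
    rw [h2] at h
    exact_mod_cast congrArg (Nat.cast : ℕ → ℝ) h
  have hq := Pq_mul r
  have hp := Pp_mul s
  have hv := Pp_mul (r+s)
  have hm := Pm_eq r
  have h4 : (4:ℝ)^(r+s) ≠ 0 := by positivity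
  apply mul_left_cancel₀ h4
  set C := ((Nat.choose (2*(r+s)+1) (2*r)) : ℝ)
  linear_combination 3*hv - 3*hch - 3*C*((Nat.factorial (2*s+1) : ℕ):ℝ)*hq
    - 3*C*((4:ℝ)^r*(Nat.factorial r : ℝ)*(∏ j ∈ range r, ((j:ℝ)+1/2)))*hp
    - C*((4:ℝ)^r*(Nat.factorial r : ℝ))*((4:ℝ)^s*(Nat.factorial s : ℝ)*(∏ j ∈ range s, ((j:ℝ)+3/2)))*hm

private lemma term_eq (n r s : ℕ) :
    ((-1 : ℝ) ^ r / 8 ^ (r+s)) *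
      (Real.Gamma (((r+s : ℕ) : ℝ) - 3 / 2) * Real.Gamma (((r+s : ℕ) : ℝ) + 3 / 2)) /
      ((Nat.factorial s : ℝ) * (Nat.factorial r : ℝ) *
        Real.Gamma ((r : ℝ) - 3 / 2) * Real.Gamma ((s : ℝ) + 3 / 2)) *
      (8 * (n : ℝ) - 1) ^ r
    = ((∏ j ∈ range (r+s), ((j:ℝ) - 3/2)) / (3 * 8 ^ (r+s) * (Nat.factorial (r+s)))) *
      ((-1 : ℝ)^r * (Nat.choose (2*(r+s)+1) (2*r) : ℝ) * (2*(r:ℝ) - 3) * (2*(r:ℝ) - 1)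
        * (8 * (n : ℝ) - 1) ^ r) := by
  have hk := hkey r s
  rw [G1 (r+s), G1 r, G2 ((r:ℕ)+s), G2 s]
  have h8 : (8:ℝ)^(r+s) ≠ 0 := by positivity
  have hBne : (∏ j ∈ range r, ((j:ℝ) - 3/2)) ≠ 0 :=
    Finset.prod_ne_zero_iff.2 (fun j _ => hne_m j)
  have hSne : (∏ j ∈ range s, ((j:ℝ) + 3/2)) ≠ 0 :=
    Finset.prod_ne_zero_iff.2 (fun j _ => hne_p j)
  set A := ∏ j ∈ range (r+s), ((j:ℝ) - 3/2) with hA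
  set B := ∏ j ∈ range r, ((j:ℝ) - 3/2) with hB
  set S := ∏ j ∈ range s, ((j:ℝ) + 3/2) with hS
  set P := ∏ j ∈ range (r+s), ((j:ℝ) + 3/2) with hP
  field_simp
  rw [div_eq_iff g1_ne]
  linear_combination (A * Real.Gamma (-(3/2):ℝ) * (8*(n:ℝ)-1)^r) * hk

/-- The quantity `ℰ_v(n,k)` from the paper:
`Σ_{r+s=v} ((-1)^r/8^v) Γ(v-3/2)Γ(v+3/2)/(s! r! Γ(r-3/2) Γ(s+3/2))
   (2k+1)^{2s+1} (8n-(2k+1)²)^r`. -/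
noncomputable def Ecal (v n k : ℕ) : ℝ :=
  ∑ r ∈ Finset.range (v + 1),
    ((-1 : ℝ) ^ r / 8 ^ v) *
      (Real.Gamma ((v : ℝ) - 3 / 2) * Real.Gamma ((v : ℝ) + 3 / 2)) /
      ((Nat.factorial (v - r) : ℝ) * (Nat.factorial r : ℝ) *
        Real.Gamma ((r : ℝ) - 3 / 2) * Real.Gamma (((v - r : ℕ) : ℝ) + 3 / 2)) *
      (2 * (k : ℝ) + 1) ^ (2 * (v - r) + 1) *
      (8 * (n : ℝ) - (2 * (k : ℝ) + 1) ^ 2) ^ r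

theorem Ecal_n_zero_ne_zero (v : ℕ) (n : ℕ) (hn : 1 ≤ n) : Ecal v n 0 ≠ 0 := by
  have hK : (∏ j ∈ range v, ((j:ℝ) - 3/2)) / (3 * 8^v * (Nat.factorial v : ℝ)) ≠ 0 :=
    div_ne_zero (Finset.prod_ne_zero_iff.2 fun j _ => hne_m j) (by positivity)
  set N : ℤ := ∑ r ∈ range (v+1),
    (-1:ℤ)^r * ((2*v+1).choose (2*r) : ℤ) * (2*(r:ℤ)-3) * (2*(r:ℤ)-1) * (8*(n:ℤ)-1)^r
    with hNdef
  have hdvd : (8*(n:ℤ)-1) ∣ (N - 3) := by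
    rw [hNdef, Finset.sum_range_succ']
    simp only [pow_zero, Nat.choose_zero_right, Nat.cast_zero, Nat.cast_one]
    norm_num
    exact Finset.dvd_sum fun i _ =>
      (dvd_pow_self _ (Nat.succ_ne_zero i)).mul_left _
  have hN : N ≠ 0 := by
    intro h0
    rw [h0] at hdvd
    have h3 : (8*(n:ℤ)-1) ∣ 3 := (dvd_neg).1 (by simpa using hdvd)
    have hle := Int.le_of_dvd (by norm_num) h3
    have h1 : (1:ℤ) ≤ (n:ℤ) := by exact_mod_cast hn
    linarith
  have hE : Ecal v n 0
      = (∏ j ∈ range v, ((j:ℝ) - 3/2)) / (3 * 8^v * (Nat.factorial v : ℝ)) * (N : ℝ) := by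
    rw [hNdef]
    push_cast
    rw [Finset.mul_sum]
    simp only [Ecal]
    refine Finset.sum_congr rfl fun r hr => ?_
    have hrv : r ≤ v := Nat.lt_succ_iff.1 (Finset.mem_range.1 hr)
    obtain ⟨s, rfl⟩ : ∃ s, v = r + s := ⟨v - r, by omega⟩
    simp only [Nat.add_sub_cancel_left, Nat.cast_zero, mul_zero, zero_add, one_pow, mul_one]
    exact term_eq n r s
  rw [hE]
  exact mul_ne_zero hK (Int.cast_ne_zero.2 hN)
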